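/- arXiv:2502.05545 — 2 statements merged into one kernel-verified Lean document; each statement's English description precedes it below -/
import Mathlib

section
/- (Monotonicity in the heat-transfer coefficient.) Assume α₂ > α₃ and A∞ > B. For h > h₂, let ξ₁(h) > z₀ be the unique solution of the reduced Robin system with coefficient h, and let ξ₂(h) ≥ 0 satisfy erf(ξ₂(h)·√(α₁/α₂)) = H(ξ₁(h)). Then for all h₂ < h < h': (i) ξ₁(h) < ξ₁(h'); (ii) ξ₂(h) < ξ₂(h'); and (iii) A(h) < A(h'), where A(h) := (B·k₃/(h·√(π·α₃)) + A∞·erf(ξ₂(h)·√(α₁/α₃)))/(k₃/(h·√(π·α₃)) + erf(ξ₂(h)·√(α₁/α₃))). -/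
noncomputable section

/-- The error function `erf x = (2/√π) ∫₀ˣ exp(−s²) ds`. -/
def erf (x : ℝ) : ℝ := (2 / Real.sqrt Real.pi) * ∫ s in (0:ℝ)..x, Real.exp (-(s^2))

/-- The complementary error function. -/
def erfc (x : ℝ) : ℝ := 1 - erf x

/-- Physical data of the three-phase Stefan problem: positive thermal conductivities,
specific heats, mass density, latent heats, and temperatures `B > C > D`. -/
structure Params where
  k₁ : ℝ
  k₂ : ℝ
  k₃ : ℝ
  c₁ : ℝ
  c₂ : ℝ
  c₃ : ℝ
  ρ : ℝ
  ℓ₁ : ℝ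
  ℓ₂ : ℝ
  B : ℝ
  C : ℝ
  D : ℝ
  hk₁ : 0 < k₁
  hk₂ : 0 < k₂
  hk₃ : 0 < k₃
  hc₁ : 0 < c₁
  hc₂ : 0 < c₂
  hc₃ : 0 < c₃
  hρ : 0 < ρ
  hℓ₁ : 0 < ℓ₁
  hℓ₂ : 0 < ℓ₂
  hBC : C < B
  hCD : D < C

namespace Params

/-- Thermal diffusivity of phase 1. -/
def α₁ (p : Params) : ℝ := p.k₁ / (p.ρ * p.c₁)

/-- Thermal diffusivity of phase 2. -/
def α₂ (p : Params) : ℝ := p.k₂ / (p.ρ * p.c₂)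

/-- Thermal diffusivity of phase 3. -/
def α₃ (p : Params) : ℝ := p.k₃ / (p.ρ * p.c₃)

/-- Stefan number `Ste₁ = c₁(C−D)/ℓ₁`. -/
def Ste₁ (p : Params) : ℝ := p.c₁ * (p.C - p.D) / p.ℓ₁

/-- Stefan number `Ste₂ = c₂(B−C)/ℓ₂`. -/
def Ste₂ (p : Params) : ℝ := p.c₂ * (p.B - p.C) / p.ℓ₂

/-- `φ(z) = z + (Ste₁/√π) exp(−z²)/erfc(z)`. -/
def φ (p : Params) (z : ℝ) : ℝ :=
  z + (p.Ste₁ / Real.sqrt Real.pi) * Real.exp (-(z^2)) / erfc z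

/-- `H(z) = erf(z√(α₁/α₂)) − (Ste₂/√π)(ℓ₂/ℓ₁)√(k₂c₁/(k₁c₂)) exp(−z²α₁/α₂)/φ(z)`. -/
def H (p : Params) (z : ℝ) : ℝ :=
  erf (z * Real.sqrt (p.α₁ / p.α₂)) -
    (p.Ste₂ / Real.sqrt Real.pi) * (p.ℓ₂ / p.ℓ₁) *
      Real.sqrt (p.k₂ * p.c₁ / (p.k₁ * p.c₂)) *
      (Real.exp (-(z^2) * (p.α₁ / p.α₂)) / p.φ z)

/-- `Q(z) = (ℓ₁/ℓ₂) φ(z) exp(z² α₁/α₂)`. -/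
def Q (p : Params) (z : ℝ) : ℝ :=
  (p.ℓ₁ / p.ℓ₂) * p.φ z * Real.exp (z^2 * (p.α₁ / p.α₂))

/-- The function `T` arising from the Robin (convective) boundary condition with
heat-transfer coefficient `h₀` and bulk temperature `Ainf`. -/
def T (p : Params) (h₀ Ainf : ℝ) (z : ℝ) : ℝ :=
  (p.Ste₂ / (Real.sqrt Real.pi * p.c₂)) * ((Ainf - p.B) / (p.B - p.C)) *
    Real.sqrt (p.k₃ * p.c₁ * p.c₃ / p.k₁) *
    (Real.exp (-(z^2) * p.α₁ * (1 / p.α₃ - 1 / p.α₂)) /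
      (p.k₃ / (h₀ * Real.sqrt (Real.pi * p.α₃)) + erf (z * Real.sqrt (p.α₁ / p.α₃)))) -
  z * Real.exp (z^2 * (p.α₁ / p.α₂))

/-- The function `V` arising from the Dirichlet boundary condition with temperature `A`. -/
def V (p : Params) (A : ℝ) (z : ℝ) : ℝ :=
  ((A - p.B) / p.ℓ₂) * Real.sqrt (p.c₁ * p.c₃ * p.k₃ / (Real.pi * p.k₁)) *
    (Real.exp (-(z^2) * (p.α₁ / p.α₃ - p.α₁ / p.α₂)) / erf (z * Real.sqrt (p.α₁ / p.α₃))) -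
  z * Real.exp (z^2 * (p.α₁ / p.α₂))

/-- The function `P` arising from the Neumann boundary condition with flux coefficient `q₀`. -/
def P (p : Params) (q₀ : ℝ) (z : ℝ) : ℝ :=
  Real.exp (z^2 * (p.α₁ / p.α₂)) *
    (-z + (q₀ / p.ℓ₂) * Real.sqrt (p.c₁ / (p.ρ * p.k₁)) * Real.exp (-(z^2) * (p.α₁ / p.α₃)))

/-- Critical heat-transfer coefficient `h₂`. -/
def h2 (p : Params) (Ainf z₀ : ℝ) : ℝ :=
  ((p.B - p.C) / (Ainf - p.B)) *
    Real.sqrt (p.k₂ * p.k₃ * p.c₂ / (Real.pi * p.c₃ * p.α₃)) *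
    (1 / erf (z₀ * Real.sqrt (p.α₁ / p.α₂)))

/-- Critical heat-flux coefficient `q₂`. -/
def q2 (p : Params) (z₀ : ℝ) : ℝ :=
  p.k₂ * (p.B - p.C) / (Real.sqrt (p.α₂ * Real.pi) * erf (z₀ * Real.sqrt (p.α₁ / p.α₂)))

end Params


/-! ### Auxiliary lemmas -/

open Real MeasureTheory Set Filter Topology intervalIntegral

namespace ErfAux

lemma gauss_cont : Continuous (fun s : ℝ => Real.exp (-(s^2))) := by continuity

lemma gauss_integrable : Integrable (fun s : ℝ => Real.exp (-(s^2))) := by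
  have := integrable_exp_neg_mul_sq (one_pos); simpa using this

lemma gauss_ii (a b : ℝ) : IntervalIntegrable (fun s : ℝ => Real.exp (-(s^2))) volume a b :=
  gauss_cont.intervalIntegrable a b

lemma sqrt_pi_pos : 0 < Real.sqrt Real.pi := Real.sqrt_pos.mpr Real.pi_pos

lemma erf_sub (a b : ℝ) :
    erf b - erf a = (2 / Real.sqrt Real.pi) * ∫ s in a..b, Real.exp (-(s^2)) := by
  rw [erf, erf, ← mul_sub,
    intervalIntegral.integral_interval_sub_left (gauss_ii 0 b) (gauss_ii 0 a)]

lemma erf_strictMono : StrictMono erf := by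
  intro a b hab
  have h : 0 < ∫ s in a..b, Real.exp (-(s^2)) :=
    intervalIntegral_pos_of_pos (gauss_ii a b) (fun x => Real.exp_pos _) hab
  have := mul_pos (div_pos two_pos sqrt_pi_pos) h
  rw [← erf_sub a b] at this
  linarith

lemma erf_zero : erf 0 = 0 := by simp [erf]

lemma erf_nonneg {x : ℝ} (hx : 0 ≤ x) : 0 ≤ erf x := by
  rcases hx.eq_or_lt with rfl | h
  · simp [erf_zero]
  · simpa [erf_zero] using (erf_strictMono h).le

lemma erf_pos {x : ℝ} (hx : 0 < x) : 0 < erf x := by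
  simpa [erf_zero] using erf_strictMono hx

lemma integral_gauss_Iic (x : ℝ) :
    ∫ s in Iic x, Real.exp (-(s^2)) = Real.sqrt Real.pi - ∫ s in Ioi x, Real.exp (-(s^2)) := by
  have h := integral_Iic_add_Ioi (b := x) gauss_integrable.integrableOn
    gauss_integrable.integrableOn
  have htot : ∫ s : ℝ, Real.exp (-(s^2)) = Real.sqrt Real.pi := by
    have := integral_gaussian (1:ℝ)
    simpa using this
  linarith [h, htot]

lemma erfc_eq (x : ℝ) :
    erfc x = (2 / Real.sqrt Real.pi) * ∫ s in Ioi x, Real.exp (-(s^2)) := by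
  have h0 : ∫ s in Iic (0:ℝ), Real.exp (-(s^2)) = Real.sqrt Real.pi / 2 := by
    have h := integral_gauss_Iic 0
    have h2 : ∫ s in Ioi (0:ℝ), Real.exp (-(s^2)) = Real.sqrt Real.pi / 2 := by
      have := integral_gaussian_Ioi (1:ℝ)
      simpa using this
    rw [h, h2]; ring
  have hx := integral_gauss_Iic x
  have hseg : (∫ s in (0:ℝ)..x, Real.exp (-(s^2)))
      = (∫ s in Iic x, Real.exp (-(s^2))) - ∫ s in Iic (0:ℝ), Real.exp (-(s^2)) := by
    rw [intervalIntegral.integral_Iic_sub_Iic gauss_integrable.integrableOn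
      gauss_integrable.integrableOn]
  rw [erfc, erf, hseg, hx, h0]
  field_simp
  ring

lemma erfc_pos (x : ℝ) : 0 < erfc x := by
  rw [erfc_eq]
  refine mul_pos (div_pos two_pos sqrt_pi_pos) ?_
  rw [setIntegral_pos_iff_support_of_nonneg_ae]
  · have : Function.support (fun s : ℝ => Real.exp (-(s^2))) = univ := by
      ext s; simp [(Real.exp_pos _).ne']
    rw [this, univ_inter]
    simp
  · filter_upwards with s using (Real.exp_pos _).le
  · exact gauss_integrable.integrableOn

lemma hasDerivAt_F (x : ℝ) :
    HasDerivAt (fun s : ℝ => -(Real.exp (-(s^2)) / 2)) (x * Real.exp (-(x^2))) x := by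
  have h1 : HasDerivAt (fun s : ℝ => -(s^2)) (-(2*x)) x := by
    simpa using (hasDerivAt_pow 2 x).fun_neg
  have h3 := (h1.exp.div_const 2).fun_neg
  refine h3.congr_deriv ?_
  ring

lemma tendsto_F : Tendsto (fun s : ℝ => -(Real.exp (-(s^2)) / 2)) atTop (nhds 0) := by
  have h1 : Tendsto (fun s : ℝ => -(s^2)) atTop atBot :=
    tendsto_neg_atBot_iff.mpr (tendsto_pow_atTop two_ne_zero)
  have h2 : Tendsto (fun s : ℝ => Real.exp (-(s^2))) atTop (nhds 0) :=
    Real.tendsto_exp_atBot.comp h1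
  have := (h2.div_const 2).neg
  simpa using this

lemma mills {b : ℝ} (hb : 0 < b) :
    erfc b ≤ Real.exp (-(b^2)) / (Real.sqrt Real.pi * b) := by
  have hint : IntegrableOn (fun s : ℝ => s * Real.exp (-(s^2))) (Ioi b) :=
    integrableOn_Ioi_deriv_of_nonneg' (fun x _ => hasDerivAt_F x)
      (fun x hx => mul_nonneg (hb.trans hx).le (Real.exp_pos _).le) tendsto_F
  have hval : ∫ s in Ioi b, s * Real.exp (-(s^2)) = Real.exp (-(b^2)) / 2 := by
    have := integral_Ioi_of_hasDerivAt_of_tendsto' (f := fun s : ℝ => -(Real.exp (-(s^2)) / 2))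
      (fun x _ => hasDerivAt_F x) hint tendsto_F
    rw [this]; ring
  have hcmp : (∫ s in Ioi b, Real.exp (-(s^2)))
      ≤ ∫ s in Ioi b, (s * Real.exp (-(s^2))) / b := by
    refine setIntegral_mono_on gauss_integrable.integrableOn (hint.div_const b)
      measurableSet_Ioi ?_
    intro x hx
    rw [le_div_iff₀ hb]
    have := (Real.exp_pos (-(x^2))).le
    nlinarith [le_of_lt (show b < x from hx)]
  have hdiv : (∫ s in Ioi b, (s * Real.exp (-(s^2))) / b)
      = Real.exp (-(b^2)) / (2*b) := by
    rw [MeasureTheory.integral_div, hval]; field_simp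
  rw [erfc_eq]
  calc (2 / Real.sqrt Real.pi) * ∫ s in Ioi b, Real.exp (-(s^2))
      ≤ (2 / Real.sqrt Real.pi) * (Real.exp (-(b^2)) / (2*b)) := by
        apply mul_le_mul_of_nonneg_left _ (by positivity)
        rw [← hdiv]; exact hcmp
    _ = Real.exp (-(b^2)) / (Real.sqrt Real.pi * b) := by
        field_simp

lemma mills_ratio_mono {a b : ℝ} (ha : 0 < a) (hab : a ≤ b) :
    Real.exp (-(a^2)) / erfc a ≤ Real.exp (-(b^2)) / erfc b := by
  have hb : 0 < b := ha.trans_le hab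
  have hea := erfc_pos a
  have heb := erfc_pos b
  rw [div_le_div_iff₀ hea heb]
  have hsplit : erfc a = erfc b + (2 / Real.sqrt Real.pi) * ∫ s in a..b, Real.exp (-(s^2)) := by
    have h := erf_sub a b
    rw [erfc, erfc] at *
    linarith
  have hderiv : ∀ x ∈ uIcc a b, HasDerivAt (fun s : ℝ => -Real.exp (-(s^2)))
      (2*x*Real.exp (-(x^2))) x := by
    intro x _
    have h1 : HasDerivAt (fun s : ℝ => -(s^2)) (-(2*x)) x := by
      simpa using (hasDerivAt_pow 2 x).fun_neg
    have := h1.exp.fun_neg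
    refine this.congr_deriv ?_
    ring
  have hii : IntervalIntegrable (fun s : ℝ => 2*s*Real.exp (-(s^2))) volume a b := by
    apply Continuous.intervalIntegrable; continuity
  have key1 : Real.exp (-(a^2)) - Real.exp (-(b^2))
      = ∫ s in a..b, 2*s*Real.exp (-(s^2)) := by
    rw [intervalIntegral.integral_eq_sub_of_hasDerivAt hderiv hii]
    ring
  have hii2 : IntervalIntegrable (fun s : ℝ => 2*b*Real.exp (-(s^2))) volume a b := by
    apply Continuous.intervalIntegrable; continuity
  have key2 : (∫ s in a..b, 2*s*Real.exp (-(s^2)))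
      ≤ 2*b*∫ s in a..b, Real.exp (-(s^2)) := by
    rw [← intervalIntegral.integral_const_mul]
    refine intervalIntegral.integral_mono_on hab hii hii2 ?_
    intro x hx
    have := (Real.exp_pos (-(x^2))).le
    nlinarith [hx.2]
  have hI : 0 ≤ ∫ s in a..b, Real.exp (-(s^2)) :=
    intervalIntegral.integral_nonneg hab (fun x _ => (Real.exp_pos _).le)
  set I := ∫ s in a..b, Real.exp (-(s^2)) with hIdef
  have h1 : Real.exp (-(a^2)) - Real.exp (-(b^2)) ≤ 2*b*I := by rw [key1]; exact key2
  have h2 : erfc b * (Real.sqrt Real.pi * b) ≤ Real.exp (-(b^2)) := by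
    rw [← le_div_iff₀ (by positivity)]
    exact mills hb
  rw [hsplit]
  set S := Real.sqrt Real.pi with hS
  have hSpos : 0 < S := sqrt_pi_pos
  rw [show Real.exp (-(b^2)) * (erfc b + 2/S*I)
      = Real.exp (-(b^2)) * erfc b + 2/S*(Real.exp (-(b^2))*I) by ring]
  have step : (Real.exp (-(a^2)) - Real.exp (-(b^2))) * erfc b
      ≤ 2/S*(Real.exp (-(b^2))*I) := by
    calc (Real.exp (-(a^2)) - Real.exp (-(b^2))) * erfc b
        ≤ (2*b*I) * erfc b := mul_le_mul_of_nonneg_right h1 heb.le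
      _ = (2/S) * ((erfc b * (S * b)) * I) := by field_simp
      _ ≤ 2/S*(Real.exp (-(b^2))*I) := by
          apply mul_le_mul_of_nonneg_left _ (by positivity)
          apply mul_le_mul_of_nonneg_right h2 hI
  nlinarith [step]

end ErfAux

namespace Params

variable (p : Params)

lemma α₁_pos : 0 < p.α₁ := div_pos p.hk₁ (mul_pos p.hρ p.hc₁)
lemma α₂_pos : 0 < p.α₂ := div_pos p.hk₂ (mul_pos p.hρ p.hc₂)
lemma α₃_pos : 0 < p.α₃ := div_pos p.hk₃ (mul_pos p.hρ p.hc₃)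
lemma Ste₁_pos : 0 < p.Ste₁ := div_pos (mul_pos p.hc₁ (sub_pos.mpr p.hCD)) p.hℓ₁
lemma Ste₂_pos : 0 < p.Ste₂ := div_pos (mul_pos p.hc₂ (sub_pos.mpr p.hBC)) p.hℓ₂

lemma φ_pos {z : ℝ} (hz : 0 < z) : 0 < p.φ z := by
  unfold Params.φ
  have h1 : 0 < (p.Ste₁ / Real.sqrt Real.pi) * Real.exp (-(z^2)) / erfc z :=
    div_pos (mul_pos (div_pos p.Ste₁_pos ErfAux.sqrt_pi_pos) (Real.exp_pos _))
      (ErfAux.erfc_pos z)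
  linarith

lemma φ_mono {a b : ℝ} (ha : 0 < a) (hab : a ≤ b) : p.φ a ≤ p.φ b := by
  unfold Params.φ
  have h := ErfAux.mills_ratio_mono ha hab
  have hc : 0 ≤ p.Ste₁ / Real.sqrt Real.pi :=
    div_nonneg p.Ste₁_pos.le ErfAux.sqrt_pi_pos.le
  have := mul_le_mul_of_nonneg_left h hc
  rw [mul_div_assoc, mul_div_assoc]
  linarith

lemma Q_mono {a b : ℝ} (ha : 0 < a) (hab : a ≤ b) : p.Q a ≤ p.Q b := by
  unfold Params.Q
  have hr : 0 ≤ p.α₁ / p.α₂ := (div_pos p.α₁_pos p.α₂_pos).le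
  have hφ := p.φ_mono ha hab
  have hφa := p.φ_pos ha
  have hE : Real.exp (a^2 * (p.α₁/p.α₂)) ≤ Real.exp (b^2 * (p.α₁/p.α₂)) := by
    apply Real.exp_le_exp.mpr
    nlinarith [mul_le_mul_of_nonneg_right (show a^2 ≤ b^2 by nlinarith) hr]
  have hl : 0 ≤ p.ℓ₁ / p.ℓ₂ := (div_pos p.hℓ₁ p.hℓ₂).le
  apply mul_le_mul (mul_le_mul_of_nonneg_left hφ hl) hE (Real.exp_pos _).le
  exact mul_nonneg hl (hφa.trans_le hφ).le

lemma H_mono {a b : ℝ} (ha : 0 < a) (hab : a ≤ b) : p.H a ≤ p.H b := by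
  unfold Params.H
  have hsr : 0 ≤ Real.sqrt (p.α₁ / p.α₂) := Real.sqrt_nonneg _
  have herf : erf (a * Real.sqrt (p.α₁ / p.α₂)) ≤ erf (b * Real.sqrt (p.α₁ / p.α₂)) :=
    ErfAux.erf_strictMono.monotone (mul_le_mul_of_nonneg_right hab hsr)
  have hr : 0 ≤ p.α₁ / p.α₂ := (div_pos p.α₁_pos p.α₂_pos).le
  have hE : Real.exp (-(b^2) * (p.α₁/p.α₂)) ≤ Real.exp (-(a^2) * (p.α₁/p.α₂)) := by
    apply Real.exp_le_exp.mpr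
    nlinarith [mul_le_mul_of_nonneg_right (show a^2 ≤ b^2 by nlinarith) hr]
  have hX : Real.exp (-(b^2) * (p.α₁/p.α₂)) / p.φ b
      ≤ Real.exp (-(a^2) * (p.α₁/p.α₂)) / p.φ a :=
    div_le_div₀ (Real.exp_pos _).le hE (p.φ_pos ha) (p.φ_mono ha hab)
  have hK : 0 ≤ (p.Ste₂ / Real.sqrt Real.pi) * (p.ℓ₂ / p.ℓ₁) *
      Real.sqrt (p.k₂ * p.c₁ / (p.k₁ * p.c₂)) := by
    apply mul_nonneg (mul_nonneg (div_nonneg p.Ste₂_pos.le ErfAux.sqrt_pi_pos.le)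
      (div_nonneg p.hℓ₂.le p.hℓ₁.le)) (Real.sqrt_nonneg _)
  have := mul_le_mul_of_nonneg_left hX hK
  linarith

lemma H_strict {a b : ℝ} (ha : 0 < a) (hab : a < b) : p.H a < p.H b := by
  unfold Params.H
  have hsr : 0 < Real.sqrt (p.α₁ / p.α₂) :=
    Real.sqrt_pos.mpr (div_pos p.α₁_pos p.α₂_pos)
  have herf : erf (a * Real.sqrt (p.α₁ / p.α₂)) < erf (b * Real.sqrt (p.α₁ / p.α₂)) :=
    ErfAux.erf_strictMono (mul_lt_mul_of_pos_right hab hsr)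
  have hr : 0 ≤ p.α₁ / p.α₂ := (div_pos p.α₁_pos p.α₂_pos).le
  have hE : Real.exp (-(b^2) * (p.α₁/p.α₂)) ≤ Real.exp (-(a^2) * (p.α₁/p.α₂)) := by
    apply Real.exp_le_exp.mpr
    nlinarith [mul_le_mul_of_nonneg_right (show a^2 ≤ b^2 by nlinarith [hab.le]) hr]
  have hX : Real.exp (-(b^2) * (p.α₁/p.α₂)) / p.φ b
      ≤ Real.exp (-(a^2) * (p.α₁/p.α₂)) / p.φ a :=
    div_le_div₀ (Real.exp_pos _).le hE (p.φ_pos ha) (p.φ_mono ha hab.le)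
  have hK : 0 ≤ (p.Ste₂ / Real.sqrt Real.pi) * (p.ℓ₂ / p.ℓ₁) *
      Real.sqrt (p.k₂ * p.c₁ / (p.k₁ * p.c₂)) := by
    apply mul_nonneg (mul_nonneg (div_nonneg p.Ste₂_pos.le ErfAux.sqrt_pi_pos.le)
      (div_nonneg p.hℓ₂.le p.hℓ₁.le)) (Real.sqrt_nonneg _)
  have := mul_le_mul_of_nonneg_left hX hK
  linarith

lemma T_K_pos {Ainf : ℝ} (hAinf : p.B < Ainf) :
    0 < (p.Ste₂ / (Real.sqrt Real.pi * p.c₂)) * ((Ainf - p.B) / (p.B - p.C)) *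
      Real.sqrt (p.k₃ * p.c₁ * p.c₃ / p.k₁) := by
  have h1 : 0 < p.Ste₂ := p.Ste₂_pos
  have h2 : 0 < Real.sqrt Real.pi * p.c₂ := mul_pos ErfAux.sqrt_pi_pos p.hc₂
  have h3 : 0 < (Ainf - p.B) / (p.B - p.C) :=
    div_pos (sub_pos.mpr hAinf) (sub_pos.mpr p.hBC)
  have h4 : 0 < Real.sqrt (p.k₃ * p.c₁ * p.c₃ / p.k₁) := by
    apply Real.sqrt_pos.mpr
    exact div_pos (mul_pos (mul_pos p.hk₃ p.hc₁) p.hc₃) p.hk₁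
  exact mul_pos (mul_pos (div_pos h1 h2) h3) h4

lemma T_mono_h {Ainf z h h' : ℝ} (hAinf : p.B < Ainf) (hz : 0 ≤ z)
    (hh : 0 < h) (hhh' : h < h') : p.T h Ainf z < p.T h' Ainf z := by
  unfold Params.T
  have hsπ : 0 < Real.sqrt (Real.pi * p.α₃) :=
    Real.sqrt_pos.mpr (mul_pos Real.pi_pos p.α₃_pos)
  have hh' : 0 < h' := hh.trans hhh'
  have he : 0 ≤ erf (z * Real.sqrt (p.α₁ / p.α₃)) :=
    ErfAux.erf_nonneg (mul_nonneg hz (Real.sqrt_nonneg _))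
  have ha : 0 < p.k₃ / (h * Real.sqrt (Real.pi * p.α₃)) := div_pos p.hk₃ (mul_pos hh hsπ)
  have ha' : 0 < p.k₃ / (h' * Real.sqrt (Real.pi * p.α₃)) := div_pos p.hk₃ (mul_pos hh' hsπ)
  have haa : p.k₃ / (h' * Real.sqrt (Real.pi * p.α₃))
      < p.k₃ / (h * Real.sqrt (Real.pi * p.α₃)) :=
    div_lt_div_of_pos_left p.hk₃ (mul_pos hh hsπ) (mul_lt_mul_of_pos_right hhh' hsπ)
  have hfrac : Real.exp (-(z^2) * p.α₁ * (1/p.α₃ - 1/p.α₂)) /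
        (p.k₃ / (h * Real.sqrt (Real.pi * p.α₃)) + erf (z * Real.sqrt (p.α₁ / p.α₃)))
      < Real.exp (-(z^2) * p.α₁ * (1/p.α₃ - 1/p.α₂)) /
        (p.k₃ / (h' * Real.sqrt (Real.pi * p.α₃)) + erf (z * Real.sqrt (p.α₁ / p.α₃))) := by
    apply div_lt_div_of_pos_left (Real.exp_pos _) (by linarith) (by linarith)
  have := mul_lt_mul_of_pos_left hfrac (p.T_K_pos hAinf)
  linarith

lemma T_anti_z {Ainf h z₁ z₂ : ℝ} (hα : p.α₃ < p.α₂) (hAinf : p.B < Ainf) (hh : 0 < h)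
    (hz1 : 0 ≤ z₁) (hz12 : z₁ ≤ z₂) : p.T h Ainf z₂ ≤ p.T h Ainf z₁ := by
  unfold Params.T
  have hsπ : 0 < Real.sqrt (Real.pi * p.α₃) :=
    Real.sqrt_pos.mpr (mul_pos Real.pi_pos p.α₃_pos)
  have ha : 0 < p.k₃ / (h * Real.sqrt (Real.pi * p.α₃)) := div_pos p.hk₃ (mul_pos hh hsπ)
  have hd : 0 ≤ 1/p.α₃ - 1/p.α₂ := by
    have h1 : 1/p.α₂ ≤ 1/p.α₃ := one_div_le_one_div_of_le p.α₃_pos hα.le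
    linarith
  have hsq : z₁^2 ≤ z₂^2 := by nlinarith
  have hα₁ := p.α₁_pos
  have hE : Real.exp (-(z₂^2) * p.α₁ * (1/p.α₃ - 1/p.α₂))
      ≤ Real.exp (-(z₁^2) * p.α₁ * (1/p.α₃ - 1/p.α₂)) := by
    apply Real.exp_le_exp.mpr
    nlinarith [mul_le_mul_of_nonneg_right hsq (mul_nonneg hα₁.le hd)]
  have he1 : 0 ≤ erf (z₁ * Real.sqrt (p.α₁ / p.α₃)) :=
    ErfAux.erf_nonneg (mul_nonneg hz1 (Real.sqrt_nonneg _))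
  have he12 : erf (z₁ * Real.sqrt (p.α₁ / p.α₃)) ≤ erf (z₂ * Real.sqrt (p.α₁ / p.α₃)) :=
    ErfAux.erf_strictMono.monotone (mul_le_mul_of_nonneg_right hz12 (Real.sqrt_nonneg _))
  have hfrac : Real.exp (-(z₂^2) * p.α₁ * (1/p.α₃ - 1/p.α₂)) /
        (p.k₃ / (h * Real.sqrt (Real.pi * p.α₃)) + erf (z₂ * Real.sqrt (p.α₁ / p.α₃)))
      ≤ Real.exp (-(z₁^2) * p.α₁ * (1/p.α₃ - 1/p.α₂)) /
        (p.k₃ / (h * Real.sqrt (Real.pi * p.α₃)) + erf (z₁ * Real.sqrt (p.α₁ / p.α₃))) :=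
    div_le_div₀ (Real.exp_pos _).le hE (by linarith) (by linarith)
  have hKfrac := mul_le_mul_of_nonneg_left hfrac (le_of_lt (p.T_K_pos hAinf))
  have hr : 0 ≤ p.α₁ / p.α₂ := (div_pos p.α₁_pos p.α₂_pos).le
  have htail : z₁ * Real.exp (z₁^2 * (p.α₁/p.α₂)) ≤ z₂ * Real.exp (z₂^2 * (p.α₁/p.α₂)) := by
    apply mul_le_mul hz12 (Real.exp_le_exp.mpr (by nlinarith)) (Real.exp_pos _).le
      (hz1.trans hz12)
  linarith

end Params

/-- Monotonicity in the heat-transfer coefficient. -/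
theorem robin_monotone_in_h (p : Params) (Ainf z₀ : ℝ) (ξ₁ ξ₂ : ℝ → ℝ)
    (hα : p.α₃ < p.α₂) (hAinf : p.B < Ainf)
    (hz₀ : 0 < z₀ ∧ p.H z₀ = 0)
    (hsol : ∀ h : ℝ, p.h2 Ainf z₀ < h →
      z₀ < ξ₁ h ∧ 0 ≤ ξ₂ h ∧
      erf (ξ₂ h * Real.sqrt (p.α₁ / p.α₂)) = p.H (ξ₁ h) ∧
      p.Q (ξ₁ h) = p.T h Ainf (ξ₂ h)) :
    ∀ h h' : ℝ, p.h2 Ainf z₀ < h → h < h' →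
      ξ₁ h < ξ₁ h' ∧ ξ₂ h < ξ₂ h' ∧
      (p.B * p.k₃ / (h * Real.sqrt (Real.pi * p.α₃)) +
          Ainf * erf (ξ₂ h * Real.sqrt (p.α₁ / p.α₃))) /
        (p.k₃ / (h * Real.sqrt (Real.pi * p.α₃)) +
          erf (ξ₂ h * Real.sqrt (p.α₁ / p.α₃))) <
      (p.B * p.k₃ / (h' * Real.sqrt (Real.pi * p.α₃)) +
          Ainf * erf (ξ₂ h' * Real.sqrt (p.α₁ / p.α₃))) /
        (p.k₃ / (h' * Real.sqrt (Real.pi * p.α₃)) +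
          erf (ξ₂ h' * Real.sqrt (p.α₁ / p.α₃))) := by
  obtain ⟨hz₀pos, hz₀H⟩ := hz₀
  intro h h' hh hhh'
  have hα1 := p.α₁_pos
  have hα2 := p.α₂_pos
  have hα3 := p.α₃_pos
  have hsr : 0 < Real.sqrt (p.α₁ / p.α₂) := Real.sqrt_pos.mpr (div_pos hα1 hα2)
  have hsr3 : 0 < Real.sqrt (p.α₁ / p.α₃) := Real.sqrt_pos.mpr (div_pos hα1 hα3)
  have hh2pos : 0 < p.h2 Ainf z₀ := by
    unfold Params.h2
    have herf : 0 < erf (z₀ * Real.sqrt (p.α₁ / p.α₂)) :=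
      ErfAux.erf_pos (mul_pos hz₀pos hsr)
    have hs : 0 < Real.sqrt (p.k₂ * p.k₃ * p.c₂ / (Real.pi * p.c₃ * p.α₃)) := by
      apply Real.sqrt_pos.mpr
      apply div_pos (mul_pos (mul_pos p.hk₂ p.hk₃) p.hc₂)
        (mul_pos (mul_pos Real.pi_pos p.hc₃) hα3)
    exact mul_pos (mul_pos (div_pos (sub_pos.mpr p.hBC) (sub_pos.mpr hAinf)) hs)
      (one_div_pos.mpr herf)
  have hhpos : 0 < h := hh2pos.trans hh
  have hh'2 : p.h2 Ainf z₀ < h' := hh.trans hhh'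
  obtain ⟨h1a, h1b, h1c, h1d⟩ := hsol h hh
  obtain ⟨h2a, h2b, h2c, h2d⟩ := hsol h' hh'2
  have hx1 : 0 < ξ₁ h := hz₀pos.trans h1a
  have hx1' : 0 < ξ₁ h' := hz₀pos.trans h2a
  have key : ξ₁ h < ξ₁ h' := by
    by_contra hcon
    push_neg at hcon
    have hH : p.H (ξ₁ h') ≤ p.H (ξ₁ h) := p.H_mono hx1' hcon
    rw [← h1c, ← h2c] at hH
    have hξ2 : ξ₂ h' ≤ ξ₂ h := by
      by_contra hc2
      push_neg at hc2
      have := ErfAux.erf_strictMono (mul_lt_mul_of_pos_right hc2 hsr)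
      linarith
    have c1 : p.Q (ξ₁ h') ≤ p.Q (ξ₁ h) := p.Q_mono hx1' hcon
    have c2 : p.T h Ainf (ξ₂ h) ≤ p.T h Ainf (ξ₂ h') := p.T_anti_z hα hAinf hhpos h2b hξ2
    have c3 : p.T h Ainf (ξ₂ h') < p.T h' Ainf (ξ₂ h') :=
      p.T_mono_h hAinf h2b hhpos hhh'
    rw [h1d] at c1
    rw [h2d] at c1
    linarith
  have hξ2lt : ξ₂ h < ξ₂ h' := by
    have hH : p.H (ξ₁ h) < p.H (ξ₁ h') := p.H_strict hx1 key
    rw [← h1c, ← h2c] at hH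
    by_contra hc
    push_neg at hc
    have : erf (ξ₂ h' * Real.sqrt (p.α₁ / p.α₂)) ≤ erf (ξ₂ h * Real.sqrt (p.α₁ / p.α₂)) :=
      ErfAux.erf_strictMono.monotone (mul_le_mul_of_nonneg_right hc hsr.le)
    linarith
  refine ⟨key, hξ2lt, ?_⟩
  have hsπ : 0 < Real.sqrt (Real.pi * p.α₃) :=
    Real.sqrt_pos.mpr (mul_pos Real.pi_pos hα3)
  have hh'pos : 0 < h' := hhpos.trans hhh'
  set e := erf (ξ₂ h * Real.sqrt (p.α₁ / p.α₃)) with he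
  set e' := erf (ξ₂ h' * Real.sqrt (p.α₁ / p.α₃)) with he'
  have hepos : 0 ≤ e := ErfAux.erf_nonneg (mul_nonneg h1b hsr3.le)
  have helt : e < e' := ErfAux.erf_strictMono (mul_lt_mul_of_pos_right hξ2lt hsr3)
  set a := p.k₃ / (h * Real.sqrt (Real.pi * p.α₃)) with ha
  set a' := p.k₃ / (h' * Real.sqrt (Real.pi * p.α₃)) with ha'
  have hapos : 0 < a := div_pos p.hk₃ (mul_pos hhpos hsπ)
  have ha'pos : 0 < a' := div_pos p.hk₃ (mul_pos hh'pos hsπ)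
  have haa : a' < a :=
    div_lt_div_of_pos_left p.hk₃ (mul_pos hhpos hsπ) (mul_lt_mul_of_pos_right hhh' hsπ)
  have hrw : p.B * p.k₃ / (h * Real.sqrt (Real.pi * p.α₃)) = p.B * a := by
    rw [ha]; ring
  have hrw' : p.B * p.k₃ / (h' * Real.sqrt (Real.pi * p.α₃)) = p.B * a' := by
    rw [ha']; ring
  rw [hrw, hrw', div_lt_div_iff₀ (by linarith) (by linarith)]
  have hkey : e * a' < e' * a := by nlinarith
  nlinarith [mul_pos (sub_pos.mpr hAinf) (sub_pos.mpr hkey)]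
end
end

section
/- (Monotonicity in the heat flux coefficient.) Assume α₂ > α₃. For q > q₂, let λ₁(q) > z₀ be the unique solution of the reduced Neumann system with data q, and let λ₂(q) ≥ 0 satisfy erf(λ₂(q)·√(α₁/α₂)) = H(λ₁(q)). Then for all q₂ < q < q': (i) λ₁(q) < λ₁(q'); (ii) λ₂(q) < λ₂(q'); and (iii) A(q) < A(q'), where A(q) := B + (q·√(π·α₃)/k₃)·erf(λ₂(q)·√(α₁/α₃)). -/
noncomputable section

section ErfLemmas
open MeasureTheory Set

lemma gaussCont : Continuous fun s : ℝ => Real.exp (-(s^2)) := by continuity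

lemma gaussInt : Integrable fun s : ℝ => Real.exp (-(s^2)) := by
  simpa [neg_one_mul] using integrable_exp_neg_mul_sq one_pos

lemma sqrtPi_pos : 0 < Real.sqrt Real.pi := Real.sqrt_pos.mpr Real.pi_pos


lemma sq_mul_le {x y r : ℝ} (hx : 0 ≤ x) (hxy : x ≤ y) (hr : 0 ≤ r) :
    x^2 * r ≤ y^2 * r := mul_le_mul_of_nonneg_right (by nlinarith) hr

lemma neg_sq_mul_le {x y r : ℝ} (hx : 0 ≤ x) (hxy : x ≤ y) (hr : 0 ≤ r) :
    -(y^2) * r ≤ -(x^2) * r := by nlinarith [sq_mul_le hx hxy hr]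

lemma erf_strictMono : StrictMono erf := by
  intro x y hxy
  have h1 : (∫ s in (0:ℝ)..x, Real.exp (-(s^2))) + ∫ s in x..y, Real.exp (-(s^2))
      = ∫ s in (0:ℝ)..y, Real.exp (-(s^2)) :=
    intervalIntegral.integral_add_adjacent_intervals
      (gaussCont.intervalIntegrable _ _) (gaussCont.intervalIntegrable _ _)
  have h2 : 0 < ∫ s in x..y, Real.exp (-(s^2)) :=
    intervalIntegral.intervalIntegral_pos_of_pos
      (gaussCont.intervalIntegrable _ _) (fun s => Real.exp_pos _) hxy
  have : (∫ s in (0:ℝ)..x, Real.exp (-(s^2))) < ∫ s in (0:ℝ)..y, Real.exp (-(s^2)) := by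
    linarith
  unfold erf
  have hc : 0 < 2 / Real.sqrt Real.pi := by positivity
  exact (mul_lt_mul_iff_right₀ hc).mpr this

lemma erf_zero : erf 0 = 0 := by simp [erf]

lemma erf_nonneg {x : ℝ} (hx : 0 ≤ x) : 0 ≤ erf x := by
  rcases eq_or_lt_of_le hx with h | h
  · simp [← h, erf_zero]
  · exact (erf_zero ▸ (erf_strictMono h).le)

lemma erf_pos {x : ℝ} (hx : 0 < x) : 0 < erf x := erf_zero ▸ erf_strictMono hx

lemma gauss_Ioi (x : ℝ) : ∫ s in Ioi x, Real.exp (-(s^2)) = Real.sqrt Real.pi / 2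
    - ∫ s in (0:ℝ)..x, Real.exp (-(s^2)) := by
  rcases le_or_gt 0 x with hx | hx
  · have hsplit : (∫ s in Ioc 0 x, Real.exp (-(s^2))) + ∫ s in Ioi x, Real.exp (-(s^2))
        = ∫ s in Ioi 0, Real.exp (-(s^2)) := by
      rw [← setIntegral_union (Ioc_disjoint_Ioi le_rfl) measurableSet_Ioi
        gaussInt.integrableOn gaussInt.integrableOn, Ioc_union_Ioi_eq_Ioi hx]
    have htot : ∫ s in Ioi (0:ℝ), Real.exp (-(s^2)) = Real.sqrt Real.pi / 2 := by
      have := integral_gaussian_Ioi 1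
      simpa [neg_one_mul] using this
    rw [intervalIntegral.integral_of_le hx]
    linarith
  · have hsplit : (∫ s in Ioc x 0, Real.exp (-(s^2))) + ∫ s in Ioi (0:ℝ), Real.exp (-(s^2))
        = ∫ s in Ioi x, Real.exp (-(s^2)) := by
      rw [← setIntegral_union (Ioc_disjoint_Ioi le_rfl) measurableSet_Ioi
        gaussInt.integrableOn gaussInt.integrableOn, Ioc_union_Ioi_eq_Ioi hx.le]
    have htot : ∫ s in Ioi (0:ℝ), Real.exp (-(s^2)) = Real.sqrt Real.pi / 2 := by
      have := integral_gaussian_Ioi 1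
      simpa [neg_one_mul] using this
    rw [intervalIntegral.integral_symm, intervalIntegral.integral_of_le hx.le]
    linarith

lemma erfc_eq (x : ℝ) : erfc x = (2 / Real.sqrt Real.pi) * ∫ s in Ioi x, Real.exp (-(s^2)) := by
  rw [gauss_Ioi, erfc, erf, mul_sub]
  have : 2 / Real.sqrt Real.pi * (Real.sqrt Real.pi / 2) = 1 := by
    field_simp
  rw [this]

lemma erfc_pos (x : ℝ) : 0 < erfc x := by
  rw [erfc_eq]
  have h : 0 < ∫ s in Ioi x, Real.exp (-(s^2)) := by
    rw [setIntegral_pos_iff_support_of_nonneg_ae]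
    · have : (Function.support fun s : ℝ => Real.exp (-(s^2))) = univ := by
        ext s; simp [Function.support, (Real.exp_pos _).ne']
      rw [this, univ_inter]
      simp [Real.volume_Ioi]
    · filter_upwards with s using (Real.exp_pos _).le
    · exact gaussInt.integrableOn
  positivity

lemma erf_lt_one (x : ℝ) : erf x < 1 := by
  have := erfc_pos x
  unfold erfc at this
  linarith

lemma erfc_le {x : ℝ} (hx : 0 < x) :
    erfc x ≤ Real.exp (-(x^2)) / (Real.sqrt Real.pi * x) := by
  have hint : IntegrableOn (fun s : ℝ => s * Real.exp (-(s^2))) (Ioi x) := by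
    have : Integrable fun s : ℝ => s * Real.exp (-(s^2)) := by
      simpa [neg_one_mul] using integrable_mul_exp_neg_mul_sq one_pos
    exact this.integrableOn
  have hval : ∫ s in Ioi x, s * Real.exp (-(s^2)) = Real.exp (-(x^2)) / 2 := by
    have hderiv : ∀ s ∈ Ici x, HasDerivAt (fun s : ℝ => -Real.exp (-(s^2)) / 2)
        (s * Real.exp (-(s^2))) s := by
      intro s _
      have h1 : HasDerivAt (fun s : ℝ => -(s^2)) (-(2*s)) s := by
        simpa using ((hasDerivAt_pow 2 s).fun_neg)
      have h2 := (h1.exp).fun_neg.div_const 2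
      exact h2.congr_deriv (by ring)
    have htend : Filter.Tendsto (fun s : ℝ => -Real.exp (-(s^2)) / 2) Filter.atTop (nhds 0) := by
      have h1 : Filter.Tendsto (fun s : ℝ => -(s^2)) Filter.atTop Filter.atBot := by
        apply Filter.tendsto_neg_atBot_iff.mpr
        simpa using tendsto_pow_atTop (two_ne_zero)
      have := (Real.tendsto_exp_atBot.comp h1).neg.div_const 2
      simpa using this
    have := MeasureTheory.integral_Ioi_of_hasDerivAt_of_tendsto' hderiv hint htend
    rw [this]; ring
  have hmono : ∫ s in Ioi x, Real.exp (-(s^2)) ≤ ∫ s in Ioi x, (1/x) * (s * Real.exp (-(s^2))) := by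
    apply setIntegral_mono_on gaussInt.integrableOn (hint.const_mul _) measurableSet_Ioi
    intro s hs
    have hs' : x < s := hs
    have h1 : (1:ℝ) ≤ s / x := (one_le_div hx).mpr hs'.le
    calc Real.exp (-(s^2)) = 1 * Real.exp (-(s^2)) := by ring
    _ ≤ (s/x) * Real.exp (-(s^2)) := by
        exact mul_le_mul_of_nonneg_right h1 (Real.exp_pos _).le
    _ = (1/x) * (s * Real.exp (-(s^2))) := by ring
  rw [MeasureTheory.integral_const_mul, hval] at hmono
  rw [erfc_eq]
  calc (2 / Real.sqrt Real.pi) * ∫ s in Ioi x, Real.exp (-(s^2))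
      ≤ (2 / Real.sqrt Real.pi) * (1/x * (Real.exp (-(x^2)) / 2)) := by
        apply mul_le_mul_of_nonneg_left hmono (by positivity)
    _ = Real.exp (-(x^2)) / (Real.sqrt Real.pi * x) := by
        field_simp

lemma erf_hasDerivAt (x : ℝ) :
    HasDerivAt erf (2 / Real.sqrt Real.pi * Real.exp (-(x^2))) x := by
  have h := intervalIntegral.integral_hasDerivAt_right
    (gaussCont.intervalIntegrable (0:ℝ) x)
    (gaussCont.stronglyMeasurableAtFilter _ _)
    gaussCont.continuousAt
  exact h.const_mul _

lemma gaussRatio_hasDerivAt (x : ℝ) :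
    HasDerivAt (fun z => Real.exp (-(z^2)) / erfc z)
      ((-(2*x) * Real.exp (-(x^2)) * erfc x -
        Real.exp (-(x^2)) * (-(2 / Real.sqrt Real.pi * Real.exp (-(x^2))))) / (erfc x)^2) x := by
  have h1 : HasDerivAt (fun z : ℝ => Real.exp (-(z^2))) (-(2*x) * Real.exp (-(x^2))) x := by
    have := ((hasDerivAt_pow 2 x).neg).exp
    simpa [mul_comm] using this
  have h2 : HasDerivAt erfc (-(2 / Real.sqrt Real.pi * Real.exp (-(x^2)))) x :=
    ((erf_hasDerivAt x).const_sub 1)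
  exact h1.div h2 (erfc_pos x).ne'

lemma gaussRatio_monotoneOn :
    MonotoneOn (fun z => Real.exp (-(z^2)) / erfc z) (Ici (0:ℝ)) := by
  apply monotoneOn_of_deriv_nonneg (convex_Ici 0)
  · exact Continuous.continuousOn (by
      exact gaussCont.div (continuous_const.sub (Continuous.mul continuous_const
        (intervalIntegral.continuous_primitive (fun a b => gaussCont.intervalIntegrable a b) 0)))
        (fun z => (erfc_pos z).ne'))
  · intro z _
    exact (gaussRatio_hasDerivAt z).differentiableAt.differentiableWithinAt
  · intro z hz
    rw [interior_Ici] at hz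
    rw [(gaussRatio_hasDerivAt z).deriv]
    have hz' : 0 < z := hz
    have hb := erfc_le hz'
    have key : 2 * z * erfc z ≤ 2 / Real.sqrt Real.pi * Real.exp (-(z^2)) := by
      have h1 : 2 * z * erfc z ≤ 2 * z * (Real.exp (-(z^2)) / (Real.sqrt Real.pi * z)) :=
        mul_le_mul_of_nonneg_left hb (by positivity)
      have h2 : 2 * z * (Real.exp (-(z^2)) / (Real.sqrt Real.pi * z))
          = 2 / Real.sqrt Real.pi * Real.exp (-(z^2)) := by
        field_simp
      linarith
    have hnum : 0 ≤ -(2*z) * Real.exp (-(z^2)) * erfc z -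
        Real.exp (-(z^2)) * (-(2 / Real.sqrt Real.pi * Real.exp (-(z^2)))) := by
      have e := (Real.exp_pos (-(z^2)))
      nlinarith [e.le]
    positivity

end ErfLemmas

section ParamsLemmas
open Set

lemma Params.α₁_pos_s19 (p : Params) : 0 < p.α₁ := div_pos p.hk₁ (mul_pos p.hρ p.hc₁)
lemma Params.α₂_pos_s19 (p : Params) : 0 < p.α₂ := div_pos p.hk₂ (mul_pos p.hρ p.hc₂)
lemma Params.α₃_pos_s19 (p : Params) : 0 < p.α₃ := div_pos p.hk₃ (mul_pos p.hρ p.hc₃)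
lemma Params.Ste₁_pos_s19 (p : Params) : 0 < p.Ste₁ :=
  div_pos (mul_pos p.hc₁ (sub_pos.mpr p.hCD)) p.hℓ₁
lemma Params.Ste₂_pos_s19 (p : Params) : 0 < p.Ste₂ :=
  div_pos (mul_pos p.hc₂ (sub_pos.mpr p.hBC)) p.hℓ₂

lemma Params.φ_strictMonoOn (p : Params) : StrictMonoOn p.φ (Ici 0) := by
  intro x hx y hy hxy
  have hg := gaussRatio_monotoneOn hx hy hxy.le
  have ha : 0 < p.Ste₁ / Real.sqrt Real.pi := div_pos p.Ste₁_pos_s19 sqrtPi_pos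
  unfold Params.φ
  rw [mul_div_assoc, mul_div_assoc]
  have := mul_le_mul_of_nonneg_left hg ha.le
  simp only at this ⊢
  linarith

lemma Params.φ_pos_s19 (p : Params) {z : ℝ} (hz : 0 < z) : 0 < p.φ z := by
  have h1 : 0 < p.Ste₁ / Real.sqrt Real.pi * Real.exp (-(z^2)) / erfc z := by
    have := p.Ste₁_pos_s19; have := sqrtPi_pos; have := erfc_pos z
    positivity
  unfold Params.φ
  linarith

lemma Params.Q_strictMonoOn (p : Params) {z₀ : ℝ} (h : 0 < z₀) :
    StrictMonoOn p.Q (Ici z₀) := by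
  intro x hx y hy hxy
  have hx0 : 0 < x := lt_of_lt_of_le h hx
  have hy0 : 0 < y := lt_of_lt_of_le h hy
  have hφ : p.φ x < p.φ y := p.φ_strictMonoOn hx0.le hy0.le hxy
  have hφx : 0 < p.φ x := p.φ_pos_s19 hx0
  have hexp : Real.exp (x^2 * (p.α₁/p.α₂)) ≤ Real.exp (y^2 * (p.α₁/p.α₂)) := by
    exact Real.exp_le_exp.mpr (sq_mul_le hx0.le hxy.le (div_pos p.α₁_pos_s19 p.α₂_pos_s19).le)
  have h1 : p.φ x * Real.exp (x^2 * (p.α₁/p.α₂)) < p.φ y * Real.exp (y^2 * (p.α₁/p.α₂)) :=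
    calc p.φ x * Real.exp (x^2 * (p.α₁/p.α₂)) < p.φ y * Real.exp (x^2 * (p.α₁/p.α₂)) :=
        mul_lt_mul_of_pos_right hφ (Real.exp_pos _)
      _ ≤ p.φ y * Real.exp (y^2 * (p.α₁/p.α₂)) :=
        mul_le_mul_of_nonneg_left hexp (lt_trans hφx hφ).le
  have hc : 0 < p.ℓ₁ / p.ℓ₂ := div_pos p.hℓ₁ p.hℓ₂
  unfold Params.Q
  rw [mul_assoc, mul_assoc]
  exact mul_lt_mul_of_pos_left h1 hc

lemma Params.H_strictMonoOn (p : Params) {z₀ : ℝ} (h : 0 < z₀) :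
    StrictMonoOn p.H (Ici z₀) := by
  intro x hx y hy hxy
  have hx0 : 0 < x := lt_of_lt_of_le h hx
  have hy0 : 0 < y := lt_of_lt_of_le h hy
  have hr : 0 < Real.sqrt (p.α₁ / p.α₂) := Real.sqrt_pos.mpr (div_pos p.α₁_pos_s19 p.α₂_pos_s19)
  have herf : erf (x * Real.sqrt (p.α₁ / p.α₂)) < erf (y * Real.sqrt (p.α₁ / p.α₂)) :=
    erf_strictMono (mul_lt_mul_of_pos_right hxy hr)
  have hK : 0 ≤ p.Ste₂ / Real.sqrt Real.pi * (p.ℓ₂ / p.ℓ₁) *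
      Real.sqrt (p.k₂ * p.c₁ / (p.k₁ * p.c₂)) := by
    have := p.Ste₂_pos_s19; have := sqrtPi_pos; have := p.hℓ₁; have := p.hℓ₂
    positivity
  have hφ : p.φ x ≤ p.φ y := (p.φ_strictMonoOn hx0.le hy0.le hxy).le
  have hφx : 0 < p.φ x := p.φ_pos_s19 hx0
  have hdiv : Real.exp (-(y^2) * (p.α₁/p.α₂)) / p.φ y
      ≤ Real.exp (-(x^2) * (p.α₁/p.α₂)) / p.φ x := by
    apply div_le_div₀ (Real.exp_pos _).le _ hφx hφ
    exact Real.exp_le_exp.mpr (neg_sq_mul_le hx0.le hxy.le (div_pos p.α₁_pos_s19 p.α₂_pos_s19).le)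
  have := mul_le_mul_of_nonneg_left hdiv hK
  unfold Params.H
  linarith

lemma Params.P_lt_of_lt (p : Params) {q q' : ℝ} (h : q < q') (z : ℝ) :
    p.P q z < p.P q' z := by
  unfold Params.P
  have hc : 0 < Real.sqrt (p.c₁ / (p.ρ * p.k₁)) * Real.exp (-(z^2) * (p.α₁/p.α₃)) := by
    have := p.hc₁; have := p.hρ; have := p.hk₁
    positivity
  apply mul_lt_mul_of_pos_left _ (Real.exp_pos _)
  apply add_lt_add_right
  have hq : q / p.ℓ₂ < q' / p.ℓ₂ := div_lt_div_of_pos_right h p.hℓ₂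
  calc q / p.ℓ₂ * Real.sqrt (p.c₁ / (p.ρ * p.k₁)) * Real.exp (-(z^2) * (p.α₁/p.α₃))
      = q / p.ℓ₂ * (Real.sqrt (p.c₁ / (p.ρ * p.k₁)) * Real.exp (-(z^2) * (p.α₁/p.α₃))) := by ring
    _ < q' / p.ℓ₂ * (Real.sqrt (p.c₁ / (p.ρ * p.k₁)) * Real.exp (-(z^2) * (p.α₁/p.α₃))) :=
        mul_lt_mul_of_pos_right hq hc
    _ = q' / p.ℓ₂ * Real.sqrt (p.c₁ / (p.ρ * p.k₁)) * Real.exp (-(z^2) * (p.α₁/p.α₃)) := by ring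

lemma Params.P_expand (p : Params) (q z : ℝ) :
    p.P q z = -(z * Real.exp (z^2 * (p.α₁/p.α₂)))
      + q / p.ℓ₂ * Real.sqrt (p.c₁ / (p.ρ * p.k₁)) *
        Real.exp (-(z^2) * (p.α₁/p.α₃ - p.α₁/p.α₂)) := by
  unfold Params.P
  have h2 : Real.exp (z^2 * (p.α₁/p.α₂)) * Real.exp (-(z^2) * (p.α₁/p.α₃))
      = Real.exp (-(z^2) * (p.α₁/p.α₃ - p.α₁/p.α₂)) := by
    rw [← Real.exp_add]; congr 1; ring
  linear_combination (q / p.ℓ₂ * Real.sqrt (p.c₁ / (p.ρ * p.k₁))) * h2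

lemma Params.P_anti (p : Params) {q : ℝ} (hq : 0 < q) (hα : p.α₃ < p.α₂)
    {x y : ℝ} (hx : 0 ≤ x) (hxy : x < y) : p.P q y < p.P q x := by
  rw [p.P_expand, p.P_expand]
  have h1 := p.α₁_pos_s19; have h2 := p.α₂_pos_s19; have h3 := p.α₃_pos_s19
  have hd : 0 < p.α₁/p.α₃ - p.α₁/p.α₂ := by
    have : p.α₁/p.α₂ < p.α₁/p.α₃ := div_lt_div_of_pos_left h1 h3 hα
    linarith
  have hcq : 0 < q / p.ℓ₂ * Real.sqrt (p.c₁ / (p.ρ * p.k₁)) := by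
    have := p.hℓ₂; have := p.hc₁; have := p.hρ; have := p.hk₁
    positivity
  have hr : 0 ≤ p.α₁/p.α₂ := (div_pos h1 h2).le
  have t1 : x * Real.exp (x^2 * (p.α₁/p.α₂)) < y * Real.exp (y^2 * (p.α₁/p.α₂)) := by
    have hee : Real.exp (x^2 * (p.α₁/p.α₂)) ≤ Real.exp (y^2 * (p.α₁/p.α₂)) :=
      Real.exp_le_exp.mpr (sq_mul_le hx hxy.le hr)
    calc x * Real.exp (x^2 * (p.α₁/p.α₂)) ≤ x * Real.exp (y^2 * (p.α₁/p.α₂)) :=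
        mul_le_mul_of_nonneg_left hee hx
      _ < y * Real.exp (y^2 * (p.α₁/p.α₂)) :=
        mul_lt_mul_of_pos_right hxy (Real.exp_pos _)
  have t2 : Real.exp (-(y^2) * (p.α₁/p.α₃ - p.α₁/p.α₂))
      ≤ Real.exp (-(x^2) * (p.α₁/p.α₃ - p.α₁/p.α₂)) := by
    exact Real.exp_le_exp.mpr (neg_sq_mul_le hx hxy.le hd.le)
  have := mul_le_mul_of_nonneg_left t2 hcq.le
  linarith

lemma Params.q2_pos (p : Params) {z₀ : ℝ} (h : 0 < z₀) : 0 < p.q2 z₀ := by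
  unfold Params.q2
  have hr : 0 < Real.sqrt (p.α₁ / p.α₂) := Real.sqrt_pos.mpr (div_pos p.α₁_pos_s19 p.α₂_pos_s19)
  have he : 0 < erf (z₀ * Real.sqrt (p.α₁ / p.α₂)) := erf_pos (mul_pos h hr)
  have h1 : 0 < Real.sqrt (p.α₂ * Real.pi) := Real.sqrt_pos.mpr (mul_pos p.α₂_pos_s19 Real.pi_pos)
  have := p.hk₂; have := p.hBC
  have hnum : 0 < p.k₂ * (p.B - p.C) := by nlinarith
  positivity

end ParamsLemmas


/-- Monotonicity in the heat-flux coefficient. -/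
theorem neumann_monotone_in_q (p : Params) (z₀ : ℝ) (lam₁ lam₂ : ℝ → ℝ)
    (hα : p.α₃ < p.α₂)
    (hz₀ : 0 < z₀ ∧ p.H z₀ = 0)
    (hsol : ∀ q : ℝ, p.q2 z₀ < q →
      z₀ < lam₁ q ∧ 0 ≤ lam₂ q ∧
      erf (lam₂ q * Real.sqrt (p.α₁ / p.α₂)) = p.H (lam₁ q) ∧
      p.Q (lam₁ q) = p.P q (lam₂ q)) :
    ∀ q q' : ℝ, p.q2 z₀ < q → q < q' →
      lam₁ q < lam₁ q' ∧ lam₂ q < lam₂ q' ∧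
      p.B + (q * Real.sqrt (Real.pi * p.α₃) / p.k₃) *
          erf (lam₂ q * Real.sqrt (p.α₁ / p.α₃)) <
      p.B + (q' * Real.sqrt (Real.pi * p.α₃) / p.k₃) *
          erf (lam₂ q' * Real.sqrt (p.α₁ / p.α₃)) := by
  intro q q' hq hqq'
  have hq' : p.q2 z₀ < q' := lt_trans hq hqq'
  obtain ⟨hz₀pos, -⟩ := hz₀
  obtain ⟨h1, h2, h3, h4⟩ := hsol q hq
  obtain ⟨h1', h2', h3', h4'⟩ := hsol q' hq'
  have hq0 : 0 < q := lt_trans (p.q2_pos hz₀pos) hq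
  have hq0' : 0 < q' := lt_trans hq0 hqq'
  have hrpos : 0 < Real.sqrt (p.α₁ / p.α₂) := Real.sqrt_pos.mpr (div_pos p.α₁_pos_s19 p.α₂_pos_s19)
  have Hmono := p.H_strictMonoOn hz₀pos
  have Qmono := p.Q_strictMonoOn hz₀pos
  have hm : lam₁ q ∈ Set.Ici z₀ := le_of_lt h1
  have hm' : lam₁ q' ∈ Set.Ici z₀ := le_of_lt h1'
  have part1 : lam₁ q < lam₁ q' := by
    by_contra hcon
    push_neg at hcon
    have hH : p.H (lam₁ q') ≤ p.H (lam₁ q) := Hmono.monotoneOn hm' hm hcon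
    have hl2 : lam₂ q' ≤ lam₂ q := by
      rw [← h3, ← h3'] at hH
      exact le_of_mul_le_mul_right (erf_strictMono.le_iff_le.mp hH) hrpos
    have hP1 : p.P q' (lam₂ q) ≤ p.P q' (lam₂ q') := by
      rcases eq_or_lt_of_le hl2 with he | hlt
      · rw [he]
      · exact (p.P_anti hq0' hα h2' hlt).le
    have hP2 : p.P q (lam₂ q) < p.P q' (lam₂ q) := p.P_lt_of_lt hqq' _
    have hQ : p.Q (lam₁ q') ≤ p.Q (lam₁ q) := Qmono.monotoneOn hm' hm hcon
    rw [h4, h4'] at hQ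
    linarith
  have part2 : lam₂ q < lam₂ q' := by
    have hH : p.H (lam₁ q) < p.H (lam₁ q') := Hmono hm hm' part1
    rw [← h3, ← h3'] at hH
    exact lt_of_mul_lt_mul_right (erf_strictMono.lt_iff_lt.mp hH) hrpos.le
  refine ⟨part1, part2, ?_⟩
  have hr3 : 0 < Real.sqrt (p.α₁ / p.α₃) := Real.sqrt_pos.mpr (div_pos p.α₁_pos_s19 p.α₃_pos_s19)
  have he1 : 0 ≤ erf (lam₂ q * Real.sqrt (p.α₁ / p.α₃)) :=
    erf_nonneg (mul_nonneg h2 hr3.le)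
  have he2 : erf (lam₂ q * Real.sqrt (p.α₁ / p.α₃)) < erf (lam₂ q' * Real.sqrt (p.α₁ / p.α₃)) :=
    erf_strictMono (mul_lt_mul_of_pos_right part2 hr3)
  apply add_lt_add_right
  have hspos : 0 < Real.sqrt (Real.pi * p.α₃) := by
    have := p.α₃_pos_s19; have := Real.pi_pos; positivity
  have c1 : 0 < q * Real.sqrt (Real.pi * p.α₃) / p.k₃ := by
    have := p.hk₃; positivity
  calc q * Real.sqrt (Real.pi * p.α₃) / p.k₃ * erf (lam₂ q * Real.sqrt (p.α₁ / p.α₃))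
      ≤ q * Real.sqrt (Real.pi * p.α₃) / p.k₃ * erf (lam₂ q' * Real.sqrt (p.α₁ / p.α₃)) :=
        mul_le_mul_of_nonneg_left he2.le c1.le
    _ < q' * Real.sqrt (Real.pi * p.α₃) / p.k₃ * erf (lam₂ q' * Real.sqrt (p.α₁ / p.α₃)) := by
        have he2' : 0 < erf (lam₂ q' * Real.sqrt (p.α₁ / p.α₃)) := lt_of_le_of_lt he1 he2
        have hqe : q * Real.sqrt (Real.pi * p.α₃) / p.k₃
            < q' * Real.sqrt (Real.pi * p.α₃) / p.k₃ :=
          div_lt_div_of_pos_right (mul_lt_mul_of_pos_right hqq' hspos) p.hk₃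
        exact mul_lt_mul_of_pos_right hqe he2'
end
end
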